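/- Reversal formula for the one-variable W function: let λ ≤ N be nonnegative integers and set λ̄ = N - λ. Then W_{λ̄}(x; q,p,t,a,b) = (qb/a)^{2λ} · [(x^{-1};q,p)_N (ax;q,p)_N / ((qbx;q,p)_N (qb/(ax);q,p)_N)] · W_λ(bq^N x; q,p,t, a b^{-2} q^{-2N}, b^{-1} q^{-2N}), where W_μ(y) := (y^{-1};q,p)_μ (ay;q,p)_μ / [(qby;q,p)_μ (qb/(ay);q,p)_μ] with the a,b parameters indicated. -/

import Mathlib

noncomputable def pochInf (a p : ℂ) : ℂ := ∏' i : ℕ, (1 - a * p ^ i)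

noncomputable def ellE (x p : ℂ) : ℂ := pochInf x p * pochInf (p / x) p

noncomputable def epoch (a q p : ℂ) (m : ℕ) : ℂ :=
  ∏ k ∈ Finset.range m, ellE (a * q ^ k) p

/-- The one-variable `W` function with parameters `a`, `b`. -/
noncomputable def W1 (x q p a b : ℂ) (m : ℕ) : ℂ :=
  epoch x⁻¹ q p m * epoch (a * x) q p m /
    (epoch (q * b * x) q p m * epoch (q * b / (a * x)) q p m)

lemma mult_aux (v p : ℂ) (hp : ‖p‖ < 1) (hv : ∀ i : ℕ, ‖v * p ^ i‖ ≤ 1/2) :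
    Multipliable (fun i : ℕ => 1 - v * p ^ i) := by
  have hne : ∀ i : ℕ, (1 : ℂ) - v * p ^ i ≠ 0 := by
    intro i h
    have : ‖v * p ^ i‖ = 1 := by
      have : v * p ^ i = 1 := by linear_combination -h
      rw [this]; simp
    linarith [hv i]
  have hsum : Summable (fun i : ℕ => Complex.log (1 - v * p ^ i)) := by
    apply Summable.of_norm_bounded (g := fun i => (3/2 : ℝ) * (‖v‖ * ‖p‖ ^ i))
    · exact ((summable_geometric_of_lt_one (norm_nonneg p) hp).mul_left ‖v‖).mul_left _
    · intro i
      have := Complex.norm_log_one_add_half_le_self (z := -(v * p ^ i)) (by simpa using hv i)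
      calc ‖Complex.log (1 - v * p ^ i)‖ ≤ 3/2 * ‖-(v * p ^ i)‖ := by
            simpa [sub_eq_add_neg] using this
        _ = 3/2 * (‖v‖ * ‖p‖ ^ i) := by simp [norm_mul, norm_pow]
  exact Complex.multipliable_of_summable_log hsum

lemma pochInf_mult (u p : ℂ) (hp : ‖p‖ < 1) :
    Multipliable (fun i : ℕ => 1 - u * p ^ i) := by
  have h0 : Filter.Tendsto (fun i : ℕ => u * p ^ i) Filter.atTop (nhds 0) := by
    simpa using (tendsto_pow_atTop_nhds_zero_of_norm_lt_one hp).const_mul u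
  have h1 : ∀ᶠ i in Filter.atTop, ‖u * p ^ i‖ < 1/2 := by
    obtain ⟨k, hk⟩ := Metric.tendsto_atTop.mp h0 (1/2) (by norm_num)
    refine Filter.eventually_atTop.mpr ⟨k, fun i hi => ?_⟩
    simpa [dist_eq_norm] using hk i hi
  obtain ⟨k, hk⟩ := Filter.eventually_atTop.mp h1
  have hshift : Multipliable (fun i : ℕ => 1 - u * p ^ (i + k)) := by
    have he : (fun i : ℕ => 1 - u * p ^ (i + k)) = (fun i : ℕ => 1 - (u * p ^ k) * p ^ i) := by
      funext i; rw [pow_add]; ring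
    rw [he]
    refine mult_aux _ _ hp fun i => ?_
    have he2 : u * p ^ k * p ^ i = u * p ^ (k + i) := by rw [pow_add]; ring
    rw [he2]
    exact le_of_lt (hk (k + i) (Nat.le_add_right k i))
  exact (HasProd.prod_range_mul (f := fun n : ℕ => 1 - u * p ^ n) (k := k)
    hshift.hasProd).multipliable

lemma pochInf_shift (u p : ℂ) (hp : ‖p‖ < 1) :
    pochInf u p = (1 - u) * pochInf (u * p) p := by
  unfold pochInf
  have hm' : Multipliable (fun n : ℕ => (fun i : ℕ => 1 - u * p ^ i) (n + 1)) := by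
    simp only []
    have he : (fun n : ℕ => 1 - u * p ^ (n + 1)) = (fun n : ℕ => 1 - (u * p) * p ^ n) := by
      funext n; rw [pow_succ]; ring
    rw [he]; exact pochInf_mult (u * p) p hp
  rw [tprod_eq_zero_mul' (f := fun i : ℕ => 1 - u * p ^ i) hm']
  simp only [pow_zero, mul_one]
  congr 1
  refine tprod_congr fun i => ?_
  rw [pow_succ]; ring

lemma ellE_inv (p : ℂ) (hp : ‖p‖ < 1) (u : ℂ) (hu : u ≠ 0) :
    ellE u⁻¹ p = -u⁻¹ * ellE u p := by
  unfold ellE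
  rw [pochInf_shift u⁻¹ p hp, pochInf_shift u p hp]
  have h1 : p / u⁻¹ = u * p := by rw [div_eq_mul_inv, inv_inv, mul_comm]
  have h2 : p / u = u⁻¹ * p := by rw [div_eq_mul_inv, mul_comm]
  rw [h1, h2]
  have h3 : (1 : ℂ) - u⁻¹ = -u⁻¹ * (1 - u) := by field_simp; ring
  rw [h3]; ring

lemma tail_eq (q p : ℂ) (hq : q ≠ 0) (hp : ‖p‖ < 1) (c : ℂ) (hc : c ≠ 0) (L M : ℕ) :
    ∏ j ∈ Finset.range L, ellE (c * q ^ (M + j)) p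
      = (∏ j ∈ Finset.range L, (-(c * q ^ (M + j))))
        * epoch (c⁻¹ * (q ^ (M + L))⁻¹ * q) q p L := by
  unfold epoch
  rw [← Finset.prod_range_reflect (fun k => ellE (c⁻¹ * (q ^ (M + L))⁻¹ * q * q ^ k) p) L]
  rw [← Finset.prod_mul_distrib]
  refine Finset.prod_congr rfl fun j hj => ?_
  have hjL : j < L := Finset.mem_range.mp hj
  have hu : c * q ^ (M + j) ≠ 0 := mul_ne_zero hc (pow_ne_zero _ hq)
  have harg : c⁻¹ * (q ^ (M + L))⁻¹ * q * q ^ (L - 1 - j) = (c * q ^ (M + j))⁻¹ := by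
    apply eq_inv_of_mul_eq_one_left
    have e1 : M + L = (M + j) + ((L - 1 - j) + 1) := by omega
    rw [e1, pow_add, pow_succ]
    have h1 : q ^ (M + j) ≠ 0 := pow_ne_zero _ hq
    have h2 : q ^ (L - 1 - j) ≠ 0 := pow_ne_zero _ hq
    field_simp
  rw [harg, ellE_inv p hp (c * q ^ (M + j)) hu]
  field_simp

theorem W1_reversal (x q p t a b : ℂ) (lam N : ℕ) (hlam : lam ≤ N)
    (hp : ‖p‖ < 1)
    (hx : x ≠ 0) (hq : q ≠ 0) (ha : a ≠ 0) (hb : b ≠ 0)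
    (hd1 : epoch (q * b * x) q p N ≠ 0)
    (hd2 : epoch (q * b / (a * x)) q p N ≠ 0)
    (hd3 : epoch (q * b * x) q p (N - lam) ≠ 0)
    (hd4 : epoch (q * b / (a * x)) q p (N - lam) ≠ 0)
    (hd5 : epoch (q * (b⁻¹ * q ^ (-(2 * N : ℤ))) * (b * q ^ N * x)) q p lam ≠ 0)
    (hd6 : epoch (q * (b⁻¹ * q ^ (-(2 * N : ℤ))) /
      (a * b ^ (-2 : ℤ) * q ^ (-(2 * N : ℤ)) * (b * q ^ N * x))) q p lam ≠ 0) :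
    W1 x q p a b (N - lam) =
      (q * b / a) ^ (2 * lam) *
        (epoch x⁻¹ q p N * epoch (a * x) q p N /
          (epoch (q * b * x) q p N * epoch (q * b / (a * x)) q p N)) *
        W1 (b * q ^ N * x) q p (a * b ^ (-2 : ℤ) * q ^ (-(2 * N : ℤ)))
          (b⁻¹ * q ^ (-(2 * N : ℤ))) lam := by
  have hp' : ‖p‖ < 1 := by exact hp
  set M := N - lam with hMdef
  have hM : M + lam = N := Nat.sub_add_cancel hlam
  have hqN : (q : ℂ) ^ N ≠ 0 := pow_ne_zero _ hq
  have hx' : x⁻¹ ≠ 0 := inv_ne_zero hx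
  have hax : a * x ≠ 0 := mul_ne_zero ha hx
  have hqbx : q * b * x ≠ 0 := mul_ne_zero (mul_ne_zero hq hb) hx
  have hqbax : q * b / (a * x) ≠ 0 := div_ne_zero (mul_ne_zero hq hb) hax
  have hz2N : q ^ (-(2 * N : ℤ)) = ((q ^ N : ℂ) ^ 2)⁻¹ := by
    rw [zpow_neg]
    congr 1
    rw [show ((2 * N : ℤ)) = ((2 * N : ℕ) : ℤ) by push_cast; ring, zpow_natCast]
    ring
  have hzb2 : b ^ (-2 : ℤ) = ((b : ℂ) ^ 2)⁻¹ := by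
    rw [zpow_neg]
    norm_cast
  have hsplit : ∀ c : ℂ, epoch c q p N = epoch c q p M *
      ∏ j ∈ Finset.range lam, ellE (c * q ^ (M + j)) p := by
    intro c
    unfold epoch
    rw [← hM, Finset.prod_range_add]
  have t1 := tail_eq q p hq hp' x⁻¹ hx' lam M
  have t2 := tail_eq q p hq hp' (a * x) hax lam M
  have t3 := tail_eq q p hq hp' (q * b * x) hqbx lam M
  have t4 := tail_eq q p hq hp' (q * b / (a * x)) hqbax lam M
  rw [hM] at t1 t2 t3 t4
  have A1 : (x⁻¹)⁻¹ * (q ^ N)⁻¹ * q = q * (b⁻¹ * q ^ (-(2 * N : ℤ))) * (b * q ^ N * x) := by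
    rw [hz2N]; field_simp
  have A2 : (a * x)⁻¹ * (q ^ N)⁻¹ * q = q * (b⁻¹ * q ^ (-(2 * N : ℤ))) /
      (a * b ^ (-2 : ℤ) * q ^ (-(2 * N : ℤ)) * (b * q ^ N * x)) := by
    rw [hz2N, hzb2]
    rw [eq_div_iff (by
      apply mul_ne_zero
      apply mul_ne_zero
      apply mul_ne_zero ha (inv_ne_zero (pow_ne_zero _ hb))
      · exact inv_ne_zero (pow_ne_zero _ hqN)
      · exact mul_ne_zero (mul_ne_zero hb hqN) hx)]
    field_simp
  have A3 : (q * b * x)⁻¹ * (q ^ N)⁻¹ * q = (b * q ^ N * x)⁻¹ := by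
    field_simp
  have A4 : (q * b / (a * x))⁻¹ * (q ^ N)⁻¹ * q
      = a * b ^ (-2 : ℤ) * q ^ (-(2 * N : ℤ)) * (b * q ^ N * x) := by
    rw [hz2N, hzb2]; field_simp
  rw [A1] at t1
  rw [A2] at t2
  rw [A3] at t3
  rw [A4] at t4
  rw [hsplit (q * b * x), t3] at hd1
  rw [hsplit (q * b / (a * x)), t4] at hd2
  have hS3 := (mul_ne_zero_iff.mp (mul_ne_zero_iff.mp hd1).2).1
  have hP3 := (mul_ne_zero_iff.mp (mul_ne_zero_iff.mp hd1).2).2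
  have hS4 := (mul_ne_zero_iff.mp (mul_ne_zero_iff.mp hd2).2).1
  have hP4 := (mul_ne_zero_iff.mp (mul_ne_zero_iff.mp hd2).2).2
  have hS1 : (∏ j ∈ Finset.range lam, (-(x⁻¹ * q ^ (M + j)))) ≠ 0 :=
    Finset.prod_ne_zero_iff.mpr fun j _ =>
      neg_ne_zero.mpr (mul_ne_zero hx' (pow_ne_zero _ hq))
  have hS2 : (∏ j ∈ Finset.range lam, (-(a * x * q ^ (M + j)))) ≠ 0 :=
    Finset.prod_ne_zero_iff.mpr fun j _ =>
      neg_ne_zero.mpr (mul_ne_zero hax (pow_ne_zero _ hq))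
  have hSS : (∏ j ∈ Finset.range lam, (-(q * b * x * q ^ (M + j)))) *
      (∏ j ∈ Finset.range lam, (-(q * b / (a * x) * q ^ (M + j))))
      = (q * b / a) ^ (2 * lam) * ((∏ j ∈ Finset.range lam, (-(x⁻¹ * q ^ (M + j)))) *
        (∏ j ∈ Finset.range lam, (-(a * x * q ^ (M + j))))) := by
    rw [← Finset.prod_mul_distrib, ← Finset.prod_mul_distrib,
      show ((q * b / a : ℂ)) ^ (2 * lam) = ∏ _j ∈ Finset.range lam, ((q * b / a) ^ 2) by
        rw [Finset.prod_const, Finset.card_range, ← pow_mul],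
      ← Finset.prod_mul_distrib]
    refine Finset.prod_congr rfl fun j _ => ?_
    field_simp
  unfold W1
  rw [hsplit x⁻¹, hsplit (a * x), hsplit (q * b * x), hsplit (q * b / (a * x)),
    t1, t2, t3, t4]
  set E1 := epoch x⁻¹ q p M
  set E2 := epoch (a * x) q p M
  set E3 := epoch (q * b * x) q p M
  set E4 := epoch (q * b / (a * x)) q p M
  set P1 := epoch (q * (b⁻¹ * q ^ (-(2 * N : ℤ))) * (b * q ^ N * x)) q p lam
  set P2 := epoch (q * (b⁻¹ * q ^ (-(2 * N : ℤ))) /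
      (a * b ^ (-2 : ℤ) * q ^ (-(2 * N : ℤ)) * (b * q ^ N * x))) q p lam
  set P3 := epoch (b * q ^ N * x)⁻¹ q p lam
  set P4 := epoch (a * b ^ (-2 : ℤ) * q ^ (-(2 * N : ℤ)) * (b * q ^ N * x)) q p lam
  set S1 := ∏ j ∈ Finset.range lam, (-(x⁻¹ * q ^ (M + j)))
  set S2 := ∏ j ∈ Finset.range lam, (-(a * x * q ^ (M + j)))
  set S3 := ∏ j ∈ Finset.range lam, (-(q * b * x * q ^ (M + j)))
  set S4 := ∏ j ∈ Finset.range lam, (-(q * b / (a * x) * q ^ (M + j)))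
  have hSS' : a ^ (2 * lam) * (S3 * S4) = (q * b) ^ (2 * lam) * (S1 * S2) := by
    rw [hSS, div_pow]
    field_simp
  rw [div_pow]
  field_simp
  linear_combination (E1 * E2) * hSS'
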